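/- Let O be the ring of integers of a nonarchimedean local field with residue field of order Q and uniformizer absolute value r ∈ (0,1). Then for every n and any z_1,...,z_n ∈ O, Π_{i≠j}|z_i−z_j| ≤ r^{2·T(n)} where T(n) = Σ_{k≥1} (number of ordered pairs (i,j), i≠j, that can be forced into a common ball of radius r^k by pigeonhole) satisfies T(n)/(n(n−1)) → 1/(2(Q−1)) as n→∞; in particular limsup_n d_n(O) ≤ r^{1/(Q−1)}. -/

import Mathlib

open Finset Filter Topology

private def Nmin (M n : ℕ) : ℕ :=
  (n % M) * (n / M + 1) * (n / M) + (M - n % M) * (n / M) * (n / M - 1)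

private lemma nmin_cast (M n : ℕ) (hM : 0 < M) :
    ((Nmin M n : ℕ) : ℤ) = (M : ℤ) * (n / M : ℕ) * ((n / M : ℕ) - 1)
      + 2 * ((n / M : ℕ) : ℤ) * ((n % M : ℕ) : ℤ) := by
  have hb : (n % M) ≤ M := (Nat.mod_lt n hM).le
  rcases Nat.eq_zero_or_pos (n / M) with h | h
  · simp [Nmin, h]
  · have h1 : (1:ℕ) ≤ n / M := h
    simp only [Nmin]
    push_cast [hb, h1]
    ring

private lemma consec_nonneg (z : ℤ) : 0 ≤ z * (z - 1) := by
  rcases le_or_gt 1 z with h | h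
  · nlinarith
  · have hz : z ≤ 0 := by omega
    nlinarith

private lemma pointwise_bound (a g : ℤ) : a * (a - 1) + 2 * a * (g - a) ≤ g * (g - 1) := by
  nlinarith [consec_nonneg (g - a)]

private lemma cast_mul_pred (m : ℕ) : ((m * (m - 1) : ℕ) : ℤ) = (m : ℤ) * ((m : ℤ) - 1) := by
  cases m with
  | zero => simp
  | succ k => push_cast [Nat.succ_sub_one]; ring

private lemma mul_pred_eq (m : ℕ) : m * (m - 1) = m * m - m := by
  cases m with
  | zero => simp
  | succ k => rw [Nat.succ_sub_one, Nat.mul_succ, Nat.add_sub_cancel]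

private lemma pigeon_count {ι β : Type*} [Fintype ι] [DecidableEq β] [DecidableEq ι]
    (f : ι → β) (B : Finset β) (hf : ∀ i, f i ∈ B) :
    Nmin B.card (Fintype.card ι) ≤
      (Finset.univ.filter (fun ij : ι × ι => ij.1 ≠ ij.2 ∧ f ij.1 = f ij.2)).card := by
  classical
  rcases isEmpty_or_nonempty ι with hι | hι
  · simp [Nmin, Fintype.card_eq_zero, Nat.zero_mod, Nat.zero_div]
  have hM : 0 < B.card := Finset.card_pos.2 ⟨f (Classical.arbitrary ι), hf _⟩
  set M := B.card with hMdef
  set n := Fintype.card ι with hndef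
  set g : β → ℕ := fun b => (univ.filter (fun i => f i = b)).card with hgdef
  have hgsum : ∑ b ∈ B, g b = n := by
    rw [hndef, ← Finset.card_univ]
    exact (Finset.card_eq_sum_card_fiberwise (fun i _ => hf i)).symm
  have hsplit : (Finset.univ.filter (fun ij : ι × ι => ij.1 ≠ ij.2 ∧ f ij.1 = f ij.2)).card
      = ∑ b ∈ B, (g b * (g b - 1)) := by
    rw [Finset.card_eq_sum_card_fiberwise
      (f := fun ij : ι × ι => f ij.1) (t := B) (fun ij _ => hf ij.1)]
    refine Finset.sum_congr rfl fun b _ => ?_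
    have : ((Finset.univ.filter (fun ij : ι × ι => ij.1 ≠ ij.2 ∧ f ij.1 = f ij.2)).filter
        (fun ij => f ij.1 = b)) = (univ.filter (fun i => f i = b)).offDiag := by
      ext ⟨i, j⟩
      simp only [Finset.mem_filter, Finset.mem_offDiag, Finset.mem_univ, true_and]
      constructor
      · rintro ⟨⟨hne, hfe⟩, hb⟩
        exact ⟨hb, hfe.symm.trans hb, hne⟩
      · rintro ⟨hb, hb', hne⟩
        exact ⟨⟨hne, hb.trans hb'.symm⟩, hb⟩
    rw [this, Finset.offDiag_card, ← mul_pred_eq]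
  rw [hsplit]
  have hdm : (M : ℤ) * ((n / M : ℕ) : ℤ) + ((n % M : ℕ) : ℤ) = (n : ℤ) := by
    exact_mod_cast Nat.div_add_mod n M
  set a : ℤ := ((n / M : ℕ) : ℤ) with hadef
  have hmain : (Nmin M n : ℤ) ≤ ∑ b ∈ B, (g b : ℤ) * ((g b : ℤ) - 1) := by
    have hgsz : (∑ b ∈ B, (g b : ℤ)) = (n : ℤ) := by exact_mod_cast hgsum
    have expand : ∑ b ∈ B, (a * (a - 1) + 2 * a * ((g b : ℤ) - a))
        = (M : ℤ) * (a * (a - 1)) + 2 * a * ((n : ℤ) - M * a) := by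
      rw [Finset.sum_add_distrib, Finset.sum_const, ← Finset.mul_sum,
        Finset.sum_sub_distrib, Finset.sum_const, hgsz, nsmul_eq_mul, nsmul_eq_mul]
    calc (Nmin M n : ℤ) = (M : ℤ) * a * (a - 1) + 2 * a * ((n % M : ℕ) : ℤ) :=
          nmin_cast M n hM
      _ = ∑ b ∈ B, (a * (a - 1) + 2 * a * ((g b : ℤ) - a)) := by
          rw [expand]; linear_combination (2 * a) * hdm
      _ ≤ ∑ b ∈ B, (g b : ℤ) * ((g b : ℤ) - 1) :=
          Finset.sum_le_sum fun b _ => pointwise_bound a (g b)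
  have hfin : ((Nmin M n : ℕ) : ℤ) ≤ ((∑ b ∈ B, g b * (g b - 1) : ℕ) : ℤ) := by
    have hc : ((∑ b ∈ B, g b * (g b - 1) : ℕ) : ℤ) = ∑ b ∈ B, (g b : ℤ) * ((g b : ℤ) - 1) := by
      rw [Nat.cast_sum]; exact Finset.sum_congr rfl fun b _ => cast_mul_pred (g b)
    rw [hc]; exact hmain
  exact_mod_cast hfin

private lemma nmin_cast_real (M n : ℕ) (hM : 0 < M) :
    ((Nmin M n : ℕ) : ℝ) = (M : ℝ) * (n / M : ℕ) * ((n / M : ℕ) - 1)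
      + 2 * ((n / M : ℕ) : ℝ) * ((n % M : ℕ) : ℝ) := by
  have hb : (n % M) ≤ M := (Nat.mod_lt n hM).le
  rcases Nat.eq_zero_or_pos (n / M) with h | h
  · simp [Nmin, h]
  · have h1 : (1:ℕ) ≤ n / M := h
    simp only [Nmin]
    push_cast [hb, h1]
    ring

private lemma nmin_le_real (M n : ℕ) (hM : 0 < M) :
    ((Nmin M n : ℕ) : ℝ) ≤ (n : ℝ)^2 / M := by
  have hM' : (0:ℝ) < M := by exact_mod_cast hM
  have hn : (M : ℝ) * ((n / M : ℕ) : ℝ) + ((n % M : ℕ) : ℝ) = (n : ℝ) := by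
    exact_mod_cast Nat.div_add_mod n M
  have ha : (0:ℝ) ≤ ((n / M : ℕ) : ℝ) := Nat.cast_nonneg _
  rw [nmin_cast_real M n hM, le_div_iff₀ hM']
  nlinarith [sq_nonneg ((n % M : ℕ) : ℝ), mul_nonneg (mul_nonneg hM'.le hM'.le) ha]

private lemma real_le_nmin (M n : ℕ) (hM : 0 < M) :
    (n : ℝ)^2 / M - n ≤ ((Nmin M n : ℕ) : ℝ) := by
  have hM' : (0:ℝ) < M := by exact_mod_cast hM
  have hn : (M : ℝ) * ((n / M : ℕ) : ℝ) + ((n % M : ℕ) : ℝ) = (n : ℝ) := by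
    exact_mod_cast Nat.div_add_mod n M
  have hbM : ((n % M : ℕ) : ℝ) ≤ (M : ℝ) := by exact_mod_cast (Nat.mod_lt n hM).le
  have hb : (0:ℝ) ≤ ((n % M : ℕ) : ℝ) := Nat.cast_nonneg _
  rw [nmin_cast_real M n hM, sub_le_iff_le_add, div_le_iff₀ hM']
  nlinarith [mul_nonneg hb (sub_nonneg.2 hbM)]

private lemma sum_nmin_tendsto (Q : ℕ) (hQ : 1 < Q) :
    Tendsto (fun n => ((∑ k ∈ Icc 1 n, Nmin (Q^k) n : ℕ) : ℝ) / (n:ℝ)^2) atTop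
      (𝓝 (((Q:ℝ) - 1)⁻¹)) := by
  have hQ1 : (1:ℝ) < (Q:ℝ) := by exact_mod_cast hQ
  have hQ0 : (0:ℝ) < (Q:ℝ) := by linarith
  set x : ℝ := ((Q:ℝ))⁻¹ with hxdef
  have hx0 : 0 ≤ x := by positivity
  have hx1 : x < 1 := by rw [hxdef]; exact inv_lt_one_of_one_lt₀ hQ1
  have hsq1 : 1 < Real.sqrt Q := by
    rw [show (1:ℝ) = Real.sqrt 1 by simp]
    exact Real.sqrt_lt_sqrt (by norm_num) hQ1
  set y : ℝ := (Real.sqrt Q)⁻¹ with hydef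
  have hy0 : 0 ≤ y := by positivity
  have hy1 : y < 1 := inv_lt_one_of_one_lt₀ hsq1
  set C : ℝ := (1 - y)⁻¹ with hCdef
  have hC0 : 0 ≤ C := by rw [hCdef]; exact inv_nonneg.2 (by linarith)
  set G : ℕ → ℝ := fun n => ∑ k ∈ Icc 1 n, x ^ k with hGdef
  have hgeo : HasSum (fun k : ℕ => x ^ (1 + k)) (x * (1 - x)⁻¹) := by
    have h := (hasSum_geometric_of_lt_one hx0 hx1).mul_left x
    simpa [pow_add, pow_one] using h
  have hGlim : Tendsto G atTop (𝓝 (((Q:ℝ) - 1)⁻¹)) := by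
    have hv : x * (1 - x)⁻¹ = ((Q:ℝ) - 1)⁻¹ := by
      rw [hxdef]
      rw [← mul_inv]
      congr 1
      field_simp
    have ht := hgeo.tendsto_sum_nat
    rw [hv] at ht
    refine ht.congr fun n => ?_
    show ∑ i ∈ range n, x ^ (1 + i) = ∑ k ∈ Icc 1 n, x ^ k
    rw [← Finset.Ico_add_one_right_eq_Icc, Finset.sum_Ico_eq_sum_range]
    simp
  have hCsum : ∀ n : ℕ, ∑ k ∈ Icc 1 n, y ^ k ≤ C := by
    intro n
    have hsummable : Summable (fun k : ℕ => y ^ k) := summable_geometric_of_lt_one hy0 hy1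
    calc ∑ k ∈ Icc 1 n, y ^ k ≤ ∑' k : ℕ, y ^ k :=
          Summable.sum_le_tsum _ (fun k _ => pow_nonneg hy0 k) hsummable
      _ = C := by rw [tsum_geometric_of_lt_one hy0 hy1]
  have hxk : ∀ k : ℕ, ((Q^k : ℕ) : ℝ) = (x ^ k)⁻¹ := by
    intro k
    rw [hxdef, ← inv_pow, inv_inv]
    push_cast
    ring
  have hupper : ∀ n : ℕ, ((∑ k ∈ Icc 1 n, Nmin (Q^k) n : ℕ) : ℝ) ≤ (n:ℝ)^2 * G n := by
    intro n
    rw [Nat.cast_sum, hGdef, Finset.mul_sum]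
    refine Finset.sum_le_sum fun k _ => ?_
    have hQk : 0 < Q^k := pow_pos (by omega) k
    calc ((Nmin (Q^k) n : ℕ) : ℝ) ≤ (n:ℝ)^2 / ((Q^k : ℕ) : ℝ) := nmin_le_real _ _ hQk
      _ = (n:ℝ)^2 * x ^ k := by rw [hxk k, div_eq_mul_inv, inv_inv]
  have hlower : ∀ n : ℕ, (n:ℝ)^2 * G n - (n:ℝ) * Real.sqrt n * C
      ≤ ((∑ k ∈ Icc 1 n, Nmin (Q^k) n : ℕ) : ℝ) := by
    intro n
    have hkey : ∀ k ∈ Icc 1 n, (n:ℝ)^2 * x ^ k - (n:ℝ) * Real.sqrt n * y ^ k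
        ≤ ((Nmin (Q^k) n : ℕ) : ℝ) := by
      intro k _
      have hQk : 0 < Q^k := pow_pos (by omega) k
      have hrhs0 : 0 ≤ (n:ℝ) * Real.sqrt n * y ^ k := by positivity
      rw [sub_le_iff_le_add, ← sub_le_iff_le_add']
      set e : ℝ := (n:ℝ)^2 * x ^ k - ((Nmin (Q^k) n : ℕ) : ℝ) with hedef
      rcases le_or_gt e 0 with he | he
      · linarith
      · have hdiv : (n:ℝ)^2 / ((Q^k : ℕ) : ℝ) = (n:ℝ)^2 * x ^ k := by
          rw [hxk k, div_eq_mul_inv, inv_inv]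
        have he_n : e ≤ (n:ℝ) := by
          have := real_le_nmin (Q^k) n hQk
          rw [hdiv] at this
          rw [hedef]; linarith
        have he_x : e ≤ (n:ℝ)^2 * x ^ k := by
          have : (0:ℝ) ≤ ((Nmin (Q^k) n : ℕ) : ℝ) := Nat.cast_nonneg _
          rw [hedef]; linarith
        have hsq : e ^ 2 ≤ ((n:ℝ) * Real.sqrt n * y ^ k) ^ 2 := by
          have hyx : (y ^ k) ^ 2 = x ^ k := by
            rw [← pow_mul, mul_comm k 2, pow_mul, hydef, hxdef]
            congr 1
            rw [inv_pow, Real.sq_sqrt hQ0.le]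
          have hn2 : (Real.sqrt n) ^ 2 = (n:ℝ) := Real.sq_sqrt (Nat.cast_nonneg n)
          have hexp : ((n:ℝ) * Real.sqrt n * y ^ k) ^ 2 = (n:ℝ) * ((n:ℝ)^2 * x ^ k) := by
            rw [mul_pow, mul_pow, hn2, hyx]; ring
          rw [hexp, pow_two]
          exact mul_le_mul he_n he_x he.le (Nat.cast_nonneg n)
        exact (pow_le_pow_iff_left₀ he.le hrhs0 (by norm_num)).1 hsq
    calc (n:ℝ)^2 * G n - (n:ℝ) * Real.sqrt n * C
        ≤ (n:ℝ)^2 * G n - (n:ℝ) * Real.sqrt n * (∑ k ∈ Icc 1 n, y ^ k) := by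
          have := mul_le_mul_of_nonneg_left (hCsum n) (by positivity : (0:ℝ) ≤ (n:ℝ) * Real.sqrt n)
          linarith
      _ = ∑ k ∈ Icc 1 n, ((n:ℝ)^2 * x ^ k - (n:ℝ) * Real.sqrt n * y ^ k) := by
          rw [hGdef, Finset.sum_sub_distrib, Finset.mul_sum, Finset.mul_sum]
      _ ≤ ((∑ k ∈ Icc 1 n, Nmin (Q^k) n : ℕ) : ℝ) := by
          rw [Nat.cast_sum]
          exact Finset.sum_le_sum hkey
  have hinv : Tendsto (fun n : ℕ => (Real.sqrt n)⁻¹) atTop (𝓝 0) := by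
    have h1 : Tendsto (fun t : ℝ => t ^ (-(1/2 : ℝ))) atTop (𝓝 0) :=
      tendsto_rpow_neg_atTop (by norm_num)
    have h2 := h1.comp (tendsto_natCast_atTop_atTop (R := ℝ))
    refine h2.congr fun n => ?_
    simp only [Function.comp]
    rw [Real.rpow_neg (Nat.cast_nonneg n), ← Real.sqrt_eq_rpow]
  have hlo : Tendsto (fun n : ℕ => G n - C * (Real.sqrt n)⁻¹) atTop (𝓝 (((Q:ℝ) - 1)⁻¹)) := by
    have := hGlim.sub ((hinv.const_mul C))
    simpa using this
  refine tendsto_of_tendsto_of_tendsto_of_le_of_le' hlo hGlim ?_ ?_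
  · filter_upwards [eventually_ge_atTop 1] with n hn
    have hn0 : (0:ℝ) < (n:ℝ) := by exact_mod_cast hn
    have hs0 : (0:ℝ) < Real.sqrt n := Real.sqrt_pos.2 hn0
    rw [le_div_iff₀ (by positivity : (0:ℝ) < (n:ℝ)^2)]
    have hid : (Real.sqrt n)⁻¹ * (n:ℝ)^2 = (n:ℝ) * Real.sqrt n := by
      rw [inv_mul_eq_div, div_eq_iff hs0.ne', mul_assoc, Real.mul_self_sqrt hn0.le, pow_two]
    have hexp : (G n - C * (Real.sqrt n)⁻¹) * (n:ℝ)^2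
        = (n:ℝ)^2 * G n - C * ((Real.sqrt n)⁻¹ * (n:ℝ)^2) := by ring
    rw [hexp, hid]
    have := hlower n
    linarith
  · filter_upwards with n
    rcases Nat.eq_zero_or_pos n with h | h
    · simp [h, hGdef]
    have hn0 : (0:ℝ) < (n:ℝ) := by exact_mod_cast h
    rw [div_le_iff₀ (by positivity : (0:ℝ) < (n:ℝ)^2)]
    calc ((∑ k ∈ Icc 1 n, Nmin (Q^k) n : ℕ) : ℝ) ≤ (n:ℝ)^2 * G n := hupper n
      _ = G n * (n:ℝ)^2 := by ring



/-- The `n`-th diameter of a subset `E` of a nonarchimedean field. -/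
noncomputable def dn {F : Type*} [NormedField F] (E : Set F) (n : ℕ) : ℝ :=
  sSup {x : ℝ | ∃ z : Fin n → F, (∀ i, z i ∈ E) ∧
    x = (∏ ij ∈ Finset.univ.filter (fun ij : Fin n × Fin n => ij.1 ≠ ij.2),
      ‖z ij.1 - z ij.2‖) ^ (((n : ℝ) * (n - 1))⁻¹)}

/-- `pigeonT Q n` is the pigeonhole count: `n` points distributed among the `Q^k` balls
of radius `r^k` (for each level `k ≥ 1`) are forced to produce at least
`b(a+1)a + (Q^k - b)a(a-1)` ordered pairs in a common ball at level `k`, where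
`a = ⌊n/Q^k⌋` and `b = n mod Q^k`; `pigeonT Q n` is half the total (unordered count). -/
noncomputable def pigeonT (Q n : ℕ) : ℝ :=
  ((∑ k ∈ Finset.Icc 1 n,
    ((n % Q ^ k) * (n / Q ^ k + 1) * (n / Q ^ k)
      + (Q ^ k - n % Q ^ k) * (n / Q ^ k) * (n / Q ^ k - 1)) : ℕ) : ℝ) / 2

/-- Upper-bound half of the transfinite diameter computation for the ring of integers
`O = {x : ‖x‖ ≤ 1}` of a nonarchimedean local field with residue field of order `Q` and
uniformizer absolute value `r ∈ (0,1)`: for all `z_1, …, z_n ∈ O` one has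
`∏_{i≠j}‖z_i - z_j‖ ≤ r^{2·T(n)}` with `T = pigeonT Q`, `T(n)/(n(n-1)) → 1/(2(Q-1))`,
and in particular `limsup_n d_n(O) ≤ r^{1/(Q-1)}`. -/
theorem statement16 {F : Type*} [NormedField F]
    (hna : ∀ x y : F, ‖x + y‖ ≤ max ‖x‖ ‖y‖)
    (r : ℝ) (hr0 : 0 < r) (hr1 : r < 1)
    (π : F) (hπ : ‖π‖ = r)
    (hval : ∀ x : F, x ≠ 0 → ∃ m : ℤ, ‖x‖ = r ^ m)
    (Q : ℕ) (hQ : 1 < Q)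
    (hres : ∃ T : Finset F, T.card = Q ∧ (∀ t ∈ T, ‖t‖ ≤ 1) ∧
      ∀ x : F, ‖x‖ ≤ 1 → ∃! t, t ∈ T ∧ ‖x - t‖ < 1) :
    (∀ n : ℕ, ∀ z : Fin n → F, (∀ i, ‖z i‖ ≤ 1) →
        (∏ ij ∈ Finset.univ.filter (fun ij : Fin n × Fin n => ij.1 ≠ ij.2),
          ‖z ij.1 - z ij.2‖) ≤ r ^ (2 * pigeonT Q n))
    ∧ Filter.Tendsto (fun n => pigeonT Q n / ((n : ℝ) * (n - 1))) Filter.atTop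
        (nhds (1 / (2 * ((Q : ℝ) - 1))))
    ∧ Filter.limsup (fun n => dn {x : F | ‖x‖ ≤ 1} n) Filter.atTop
        ≤ r ^ ((1 : ℝ) / ((Q : ℝ) - 1)) := by
  classical
  have hQ1 : (1:ℝ) < (Q:ℝ) := by exact_mod_cast hQ
  have hpig : ∀ m : ℕ, pigeonT Q m = ((∑ k ∈ Icc 1 m, Nmin (Q^k) m : ℕ) : ℝ) / 2 := fun m => rfl
  obtain ⟨T, hTcard, hTnorm, hTres⟩ := hres
  have hπ0 : π ≠ 0 := by
    intro h
    rw [h, norm_zero] at hπ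
    linarith
  have hdigx : ∀ x : F, ∃ t : F, ‖x‖ ≤ 1 → t ∈ T ∧ ‖x - t‖ < 1 := by
    intro x
    by_cases hx : ‖x‖ ≤ 1
    · obtain ⟨t, ht, -⟩ := hTres x hx
      exact ⟨t, fun _ => ht⟩
    · exact ⟨0, fun h => absurd h hx⟩
  choose dig hdig using hdigx
  set nxt : F → F := fun x => (x - dig x) / π with hnxtdef
  have hsub_le : ∀ x : F, ‖x‖ ≤ 1 → ‖x - dig x‖ ≤ r := by
    intro x hx
    have h1 : ‖x - dig x‖ < 1 := (hdig x hx).2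
    by_cases hz : x - dig x = 0
    · rw [hz, norm_zero]; linarith
    · obtain ⟨m, hm⟩ := hval _ hz
      rw [hm] at h1 ⊢
      have hm1 : 1 ≤ m := by
        by_contra hc
        push_neg at hc
        have h0 : r ^ (0:ℤ) ≤ r ^ m :=
          zpow_le_zpow_right_of_le_one₀ hr0 hr1.le (by omega)
        rw [zpow_zero] at h0
        linarith
      calc r ^ m ≤ r ^ (1:ℤ) := zpow_le_zpow_right_of_le_one₀ hr0 hr1.le hm1
        _ = r := zpow_one r
  have hnxt_le : ∀ x : F, ‖x‖ ≤ 1 → ‖nxt x‖ ≤ 1 := by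
    intro x hx
    show ‖(x - dig x) / π‖ ≤ 1
    rw [norm_div, hπ, div_le_one hr0]
    exact hsub_le x hx
  have hrec : ∀ x : F, dig x + π * nxt x = x := by
    intro x
    show dig x + π * ((x - dig x) / π) = x
    rw [mul_div_cancel₀ _ hπ0]
    ring
  set digs : F → ℕ → F := fun x i => dig (nxt^[i] x) with hdigsdef
  have hiter : ∀ (m : ℕ) (x : F), ‖x‖ ≤ 1 → ‖nxt^[m] x‖ ≤ 1 := by
    intro m
    induction m with
    | zero => intro x hx; simpa using hx
    | succ m ih =>
      intro x hx
      rw [Function.iterate_succ_apply]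
      exact ih _ (hnxt_le x hx)
  have hultra : ∀ x y : F, ‖x - y‖ ≤ max ‖x‖ ‖y‖ := by
    intro x y
    have h := hna x (-y)
    simpa [sub_eq_add_neg] using h
  have hcode : ∀ (k : ℕ) (x y : F), ‖x‖ ≤ 1 → ‖y‖ ≤ 1 →
      (∀ i < k, digs x i = digs y i) → ‖x - y‖ ≤ r ^ k := by
    intro k
    induction k with
    | zero =>
      intro x y hx hy _
      simpa using le_trans (hultra x y) (max_le hx hy)
    | succ k ih =>
      intro x y hx hy h
      have h0 : dig x = dig y := by
        have := h 0 (Nat.succ_pos k)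
        simpa [hdigsdef] using this
      have hs : ∀ i < k, digs (nxt x) i = digs (nxt y) i := by
        intro i hi
        have := h (i+1) (by omega)
        simpa [hdigsdef, Function.iterate_succ_apply] using this
      have hIH := ih (nxt x) (nxt y) (hnxt_le x hx) (hnxt_le y hy) hs
      have hxy : x - y = π * (nxt x - nxt y) := by
        conv_lhs => rw [← hrec x, ← hrec y]
        rw [h0]; ring
      rw [hxy, norm_mul, hπ]
      calc r * ‖nxt x - nxt y‖ ≤ r * r ^ k := mul_le_mul_of_nonneg_left hIH hr0.le
        _ = r ^ (k+1) := by rw [pow_succ]; ring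
  -- PART 1
  have part1 : ∀ n : ℕ, ∀ z : Fin n → F, (∀ i, ‖z i‖ ≤ 1) →
      (∏ ij ∈ Finset.univ.filter (fun ij : Fin n × Fin n => ij.1 ≠ ij.2),
        ‖z ij.1 - z ij.2‖) ≤ r ^ (2 * pigeonT Q n) := by
    intro n z hz
    set D := Finset.univ.filter (fun ij : Fin n × Fin n => ij.1 ≠ ij.2) with hD
    set cnt : Fin n × Fin n → ℕ := fun ij =>
      ((Icc 1 n).filter (fun k => ∀ i < k, digs (z ij.1) i = digs (z ij.2) i)).card with hcnt
    have hpair : ∀ ij ∈ D, ‖z ij.1 - z ij.2‖ ≤ r ^ (cnt ij) := by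
      intro ij _
      show ‖z ij.1 - z ij.2‖ ≤
        r ^ ((Icc 1 n).filter (fun k => ∀ i < k, digs (z ij.1) i = digs (z ij.2) i)).card
      set s := (Icc 1 n).filter (fun k => ∀ i < k, digs (z ij.1) i = digs (z ij.2) i) with hs
      rcases Finset.eq_empty_or_nonempty s with he | hne
      · rw [he]
        simpa using hcode 0 _ _ (hz _) (hz _) (by omega)
      · have hmax := Finset.max'_mem s hne
        set K := s.max' hne with hK
        obtain ⟨hKIcc, hKprop⟩ := Finset.mem_filter.1 hmax
        have hseq : s = Icc 1 K := by
          apply Finset.Subset.antisymm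
          · intro k hk
            have h1 : k ∈ Icc 1 n := (Finset.mem_filter.1 hk).1
            exact Finset.mem_Icc.2 ⟨(Finset.mem_Icc.1 h1).1, Finset.le_max' s k hk⟩
          · intro k hk
            obtain ⟨hk1, hkK⟩ := Finset.mem_Icc.1 hk
            refine Finset.mem_filter.2 ⟨Finset.mem_Icc.2
              ⟨hk1, le_trans hkK (Finset.mem_Icc.1 hKIcc).2⟩, ?_⟩
            intro i hi
            exact hKprop i (lt_of_lt_of_le hi hkK)
        have hcard : s.card = K := by
          rw [hseq, Nat.card_Icc]
          omega
        rw [hcard]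
        exact hcode K _ _ (hz _) (hz _) hKprop
    have hlevel : ∀ k ∈ Icc 1 n, Nmin (Q^k) n ≤
        (D.filter (fun ij => ∀ i < k, digs (z ij.1) i = digs (z ij.2) i)).card := by
      intro k _
      have hf : ∀ j : Fin n, (fun i : Fin k => digs (z j) (i : ℕ)) ∈
          Fintype.piFinset (fun _ : Fin k => T) := by
        intro j
        rw [Fintype.mem_piFinset]
        intro i
        exact (hdig _ (hiter (i : ℕ) (z j) (hz j))).1
      have hcount := pigeon_count (fun j : Fin n => (fun i : Fin k => digs (z j) (i : ℕ)))
        (Fintype.piFinset (fun _ : Fin k => T)) hf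
      have hBcard : (Fintype.piFinset (fun _ : Fin k => T)).card = Q ^ k := by
        rw [Fintype.card_piFinset]
        simp [hTcard]
      rw [hBcard, Fintype.card_fin] at hcount
      have hsets : Finset.univ.filter (fun ij : Fin n × Fin n => ij.1 ≠ ij.2 ∧
            (fun i : Fin k => digs (z ij.1) (i : ℕ)) = (fun i : Fin k => digs (z ij.2) (i : ℕ)))
          = D.filter (fun ij => ∀ i < k, digs (z ij.1) i = digs (z ij.2) i) := by
        rw [hD, Finset.filter_filter]
        apply Finset.filter_congr
        intro ij _
        constructor
        · rintro ⟨hne, hfe⟩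
          refine ⟨hne, fun i hi => ?_⟩
          exact congrFun hfe ⟨i, hi⟩
        · rintro ⟨hne, hfe⟩
          exact ⟨hne, funext fun i => hfe (i : ℕ) i.isLt⟩
      rw [hsets] at hcount
      exact hcount
    have hdouble : ∑ k ∈ Icc 1 n,
        (D.filter (fun ij => ∀ i < k, digs (z ij.1) i = digs (z ij.2) i)).card
        = ∑ ij ∈ D, cnt ij := by
      calc ∑ k ∈ Icc 1 n,
            (D.filter (fun ij => ∀ i < k, digs (z ij.1) i = digs (z ij.2) i)).card
          = ∑ k ∈ Icc 1 n, ∑ ij ∈ D,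
              (if ∀ i < k, digs (z ij.1) i = digs (z ij.2) i then 1 else 0) :=
            Finset.sum_congr rfl fun k _ => Finset.card_filter _ _
        _ = ∑ ij ∈ D, ∑ k ∈ Icc 1 n,
              (if ∀ i < k, digs (z ij.1) i = digs (z ij.2) i then 1 else 0) :=
            Finset.sum_comm
        _ = ∑ ij ∈ D, cnt ij :=
            Finset.sum_congr rfl fun ij _ => (Finset.card_filter _ _).symm
    have hS : (∑ k ∈ Icc 1 n, Nmin (Q^k) n) ≤ ∑ ij ∈ D, cnt ij := by
      rw [← hdouble]
      exact Finset.sum_le_sum hlevel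
    have hprod : (∏ ij ∈ D, ‖z ij.1 - z ij.2‖) ≤ ∏ ij ∈ D, r ^ cnt ij :=
      Finset.prod_le_prod (fun ij _ => norm_nonneg _) hpair
    have hpow : (∏ ij ∈ D, r ^ cnt ij) = r ^ (∑ ij ∈ D, cnt ij) :=
      Finset.prod_pow_eq_pow_sum D cnt r
    have hmono : r ^ (∑ ij ∈ D, cnt ij) ≤ r ^ (∑ k ∈ Icc 1 n, Nmin (Q^k) n) :=
      pow_le_pow_of_le_one hr0.le hr1.le hS
    have hrw : r ^ (2 * pigeonT Q n) = r ^ ((∑ k ∈ Icc 1 n, Nmin (Q^k) n : ℕ) : ℕ) := by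
      have h2 : 2 * pigeonT Q n = ((∑ k ∈ Icc 1 n, Nmin (Q^k) n : ℕ) : ℝ) := by
        rw [hpig n]; ring
      rw [h2, Real.rpow_natCast]
    rw [hrw]
    exact le_trans hprod (le_trans (le_of_eq hpow) hmono)
  -- PART 2
  have part2 : Filter.Tendsto (fun n => pigeonT Q n / ((n : ℝ) * ((n : ℝ) - 1))) Filter.atTop
      (𝓝 (1 / (2 * ((Q : ℝ) - 1)))) := by
    have hS := sum_nmin_tendsto Q hQ
    have hhalf : Tendsto (fun n : ℕ => (n:ℝ) / (2 * ((n:ℝ) - 1))) atTop (𝓝 (1/2)) := by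
      have h2 : Tendsto (fun n : ℕ => ((1:ℝ) - ((n:ℝ))⁻¹)⁻¹ * (1/2)) atTop (𝓝 (1/2)) := by
        have h3 := ((tendsto_const_nhds (x := (1:ℝ)) (f := atTop (α := ℕ))).sub
          (tendsto_inv_atTop_nhds_zero_nat : Tendsto (fun n : ℕ => ((n:ℝ))⁻¹) atTop (𝓝 0))).inv₀ (by norm_num)
        have h4 := h3.mul_const (1/2 : ℝ)
        simpa using h4
      refine h2.congr' ?_
      filter_upwards [eventually_ge_atTop 2] with n hn
      have hn1 : (1:ℝ) < (n:ℝ) := by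
        have : (2:ℝ) ≤ (n:ℝ) := by exact_mod_cast hn
        linarith
      have hn0 : (n:ℝ) ≠ 0 := by linarith
      have hnm1 : (n:ℝ) - 1 ≠ 0 := by intro h; rw [sub_eq_zero] at h; linarith [h]
      have hrw1 : (1 - ((n:ℝ))⁻¹) = (((n:ℝ)) - 1) / (n:ℝ) := by field_simp
      rw [hrw1, inv_div, div_mul_div_comm, mul_one, mul_comm ((n:ℝ) - 1) 2]
    have hmul := hS.mul hhalf
    have hval' : ((Q:ℝ) - 1)⁻¹ * (1/2) = 1 / (2 * ((Q:ℝ) - 1)) := by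
      have hne : (Q:ℝ) - 1 ≠ 0 := by intro h; rw [sub_eq_zero] at h; linarith [h]
      field_simp
    rw [hval'] at hmul
    refine hmul.congr' ?_
    filter_upwards [eventually_ge_atTop 2] with n hn
    have hn1 : (1:ℝ) < (n:ℝ) := by
      have : (2:ℝ) ≤ (n:ℝ) := by exact_mod_cast hn
      linarith
    have hn0 : (n:ℝ) ≠ 0 := by linarith
    have hnm1 : (n:ℝ) - 1 ≠ 0 := by intro h; rw [sub_eq_zero] at h; linarith [h]
    rw [hpig n]
    field_simp
  refine ⟨part1, part2, ?_⟩
  -- PART 3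
  set u : ℕ → ℝ := fun n => r ^ (2 * pigeonT Q n * (((n:ℝ) * ((n:ℝ) - 1))⁻¹)) with hu
  have hd_le : ∀ n : ℕ, dn {x : F | ‖x‖ ≤ 1} n ≤ u n := by
    intro n
    have hnn : (0:ℝ) ≤ (n:ℝ) * ((n:ℝ) - 1) := by
      rcases Nat.eq_zero_or_pos n with h | h
      · simp [h]
      · have : (1:ℝ) ≤ (n:ℝ) := by exact_mod_cast h
        have h1 : (0:ℝ) ≤ (n:ℝ) - 1 := by linarith
        positivity
    have hie : (0:ℝ) ≤ ((n:ℝ) * ((n:ℝ) - 1))⁻¹ := inv_nonneg.2 hnn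
    apply Real.sSup_le
    · rintro v ⟨z, hzmem, rfl⟩
      have hzn : ∀ i, ‖z i‖ ≤ 1 := fun i => hzmem i
      have hP := part1 n z hzn
      have hP0 : (0:ℝ) ≤ ∏ ij ∈ Finset.univ.filter (fun ij : Fin n × Fin n => ij.1 ≠ ij.2),
          ‖z ij.1 - z ij.2‖ := Finset.prod_nonneg fun _ _ => norm_nonneg _
      calc (∏ ij ∈ Finset.univ.filter (fun ij : Fin n × Fin n => ij.1 ≠ ij.2),
              ‖z ij.1 - z ij.2‖) ^ (((n:ℝ) * ((n:ℝ) - 1))⁻¹)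
          ≤ (r ^ (2 * pigeonT Q n)) ^ (((n:ℝ) * ((n:ℝ) - 1))⁻¹) :=
            Real.rpow_le_rpow hP0 hP hie
        _ = u n := by rw [hu, ← Real.rpow_mul hr0.le]
    · exact Real.rpow_nonneg hr0.le _
  have hexp : Tendsto (fun n : ℕ => 2 * pigeonT Q n * (((n:ℝ) * ((n:ℝ) - 1))⁻¹)) atTop
      (𝓝 ((1:ℝ) / ((Q:ℝ) - 1))) := by
    have h1 := part2.const_mul (2:ℝ)
    have hval2 : (2:ℝ) * (1 / (2 * ((Q:ℝ) - 1))) = 1 / ((Q:ℝ) - 1) := by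
      have hne : (Q:ℝ) - 1 ≠ 0 := by intro h; rw [sub_eq_zero] at h; linarith [h]
      field_simp
    rw [hval2] at h1
    refine h1.congr fun n => ?_
    rw [div_eq_mul_inv]
    ring
  have hulim : Tendsto u atTop (𝓝 (r ^ ((1:ℝ) / ((Q:ℝ) - 1)))) :=
    tendsto_const_nhds.rpow hexp (Or.inl hr0.ne')
  have hdn0 : ∀ n, 0 ≤ dn {x : F | ‖x‖ ≤ 1} n := by
    intro n
    apply Real.sSup_nonneg
    rintro v ⟨z, hzm, rfl⟩
    exact Real.rpow_nonneg (Finset.prod_nonneg fun _ _ => norm_nonneg _) _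
  have hbg : IsBoundedUnder (· ≥ ·) atTop (fun n => dn {x : F | ‖x‖ ≤ 1} n) :=
    isBoundedUnder_of ⟨0, fun n => hdn0 n⟩
  have hcob : IsCoboundedUnder (· ≤ ·) atTop (fun n => dn {x : F | ‖x‖ ≤ 1} n) :=
    hbg.isCoboundedUnder_le
  have hbdd : IsBoundedUnder (· ≤ ·) atTop u := hulim.isBoundedUnder_le
  calc Filter.limsup (fun n => dn {x : F | ‖x‖ ≤ 1} n) Filter.atTop
      ≤ Filter.limsup u Filter.atTop :=
        Filter.limsup_le_limsup (Eventually.of_forall hd_le) hcob hbdd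
    _ = r ^ ((1:ℝ) / ((Q:ℝ) - 1)) := hulim.limsup_eq
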